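/- For a graph G of order n ≥ 3 with no isolated vertices, γ_tR(G) = 3 if and only if G has a universal vertex. -/

import Mathlib

open SimpleGraph Finset

variable {V : Type*}

/-- `S` is a dominating set of `G`. -/
def Dominating (G : SimpleGraph V) (S : Finset V) : Prop :=
  ∀ v, v ∉ S → ∃ u ∈ S, G.Adj u v

/-- `S` is a total dominating set of `G`. -/
def TotalDominating (G : SimpleGraph V) (S : Finset V) : Prop :=
  ∀ v : V, ∃ u ∈ S, G.Adj u v

/-- The domination number γ(G). -/
noncomputable def gamma (G : SimpleGraph V) [Fintype V] : ℕ :=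
  sInf {n | ∃ S : Finset V, Dominating G S ∧ S.card = n}

/-- The total domination number γ_t(G). -/
noncomputable def gammaT (G : SimpleGraph V) [Fintype V] : ℕ :=
  sInf {n | ∃ S : Finset V, TotalDominating G S ∧ S.card = n}

/-- `f` is a total Roman dominating function on `G`. -/
def IsTRDF (G : SimpleGraph V) (f : V → ℕ) : Prop :=
  (∀ v, f v ≤ 2) ∧ (∀ v, f v = 0 → ∃ u, G.Adj u v ∧ f u = 2) ∧
    (∀ v, 0 < f v → ∃ u, G.Adj u v ∧ 0 < f u)

/-- The total Roman domination number γ_tR(G). -/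
noncomputable def gammaTR (G : SimpleGraph V) [Fintype V] : ℕ :=
  sInf {n | ∃ f : V → ℕ, IsTRDF G f ∧ ∑ v, f v = n}

/-- The graph `G + uv`. -/
def addEdge (G : SimpleGraph V) (u v : V) : SimpleGraph V :=
  G ⊔ SimpleGraph.fromEdgeSet {s(u, v)}

/-- The graph `G - uv`. -/
def deleteEdge (G : SimpleGraph V) (u v : V) : SimpleGraph V :=
  G.deleteEdges {s(u, v)}

/-- `G` has no isolated vertices. -/
def NoIsolated (G : SimpleGraph V) : Prop := ∀ v : V, ∃ u, G.Adj u v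

/-- The degree of `v` in `G`. -/
noncomputable def degreeN (G : SimpleGraph V) (v : V) : ℕ :=
  {u | G.Adj v u}.ncard

lemma trdf_sum_ge (G : SimpleGraph V) [Fintype V] (h : NoIsolated G)
    (hn : 3 ≤ Fintype.card V) (f : V → ℕ) (hf : IsTRDF G f) : 3 ≤ ∑ v, f v := by
  classical
  obtain ⟨h2, h0, hp⟩ := hf
  by_cases hz : ∃ z, f z = 0
  · obtain ⟨z, hz⟩ := hz
    obtain ⟨u, hu, hu2⟩ := h0 z hz
    obtain ⟨x, hx, hxp⟩ := hp u (by omega)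
    have hxu : x ≠ u := fun e => (G.loopless.irrefl u (e ▸ hx)).elim
    have hsub : f u + f x ≤ ∑ v, f v := by
      have := Finset.sum_le_sum_of_subset (f := f)
        (Finset.subset_univ ({u, x} : Finset V))
      simpa [Finset.sum_pair (Ne.symm hxu)] using this
    omega
  · push_neg at hz
    calc 3 ≤ Fintype.card V := hn
      _ = ∑ _v : V, 1 := by simp
      _ ≤ ∑ v, f v := Finset.sum_le_sum fun v _ =>
          Nat.one_le_iff_ne_zero.2 (hz v)

lemma trdf_set_nonempty (G : SimpleGraph V) [Fintype V] (h : NoIsolated G) :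
    {n | ∃ f : V → ℕ, IsTRDF G f ∧ ∑ v, f v = n}.Nonempty := by
  refine ⟨∑ _v : V, 2, fun _ => 2, ⟨fun v => le_refl 2, fun v hv => by simp at hv,
    fun v _ => ?_⟩, rfl⟩
  obtain ⟨u, hu⟩ := h v
  exact ⟨u, hu, by simp⟩

lemma universal_trdf (G : SimpleGraph V) [Fintype V] (hn : 3 ≤ Fintype.card V)
    (v : V) (hv : ∀ u : V, u ≠ v → G.Adj v u) :
    ∃ f : V → ℕ, IsTRDF G f ∧ ∑ x, f x = 3 := by
  classical
  have hw : ∃ w : V, w ≠ v := by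
    by_contra hc
    push_neg at hc
    have huniv : (Finset.univ : Finset V) = {v} :=
      Finset.eq_singleton_iff_unique_mem.2 ⟨Finset.mem_univ v, fun x _ => hc x⟩
    have := congrArg Finset.card huniv
    simp [Finset.card_univ] at this
    omega
  obtain ⟨w, hwv⟩ := hw
  refine ⟨fun u => if u = v then 2 else if u = w then 1 else 0, ⟨?_, ?_, ?_⟩, ?_⟩
  · intro u
    by_cases h1 : u = v <;> by_cases h2 : u = w <;> simp [h1, h2, hwv]
  · intro u hu
    have huv : u ≠ v := by intro e; simp [e] at hu
    exact ⟨v, hv u huv, by simp⟩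
  · intro u hu
    by_cases huv : u = v
    · subst huv
      exact ⟨w, (hv w hwv).symm, by simp [hwv]⟩
    · exact ⟨v, hv u huv, by simp⟩
  · rw [← Finset.sum_subset (Finset.subset_univ ({v, w} : Finset V))]
    · rw [Finset.sum_pair (Ne.symm hwv)]
      simp [hwv]
    · intro x _ hx
      simp only [Finset.mem_insert, Finset.mem_singleton, not_or] at hx
      simp [hx.1, hx.2]

theorem stmt4 (G : SimpleGraph V) [Fintype V] (h : NoIsolated G)
    (hn : 3 ≤ Fintype.card V) :
    gammaTR G = 3 ↔ ∃ v : V, ∀ u : V, u ≠ v → G.Adj v u := by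
  classical
  constructor
  · intro heq
    have hne := trdf_set_nonempty G h
    have h3 : 3 ∈ {n | ∃ f : V → ℕ, IsTRDF G f ∧ ∑ v, f v = n} := by
      have := Nat.sInf_mem hne
      rwa [show sInf {n | ∃ f : V → ℕ, IsTRDF G f ∧ ∑ v, f v = n} = 3 from heq]
        at this
    obtain ⟨f, ⟨h2, h0, hp⟩, hsum⟩ := h3
    by_cases hv2 : ∃ v, f v = 2
    · obtain ⟨v, hv⟩ := hv2
      have hrest : ∑ x ∈ Finset.univ.erase v, f x = 1 := by
        have := Finset.sum_erase_add Finset.univ f (Finset.mem_univ v)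
        omega
      obtain ⟨w, hwadj, hwp⟩ := hp v (by omega)
      have hwv : w ≠ v := fun e => (G.loopless.irrefl v (e ▸ hwadj)).elim
      have hfw : f w = 1 := by
        have : f w ≤ 1 := hrest ▸ Finset.single_le_sum (fun i _ => Nat.zero_le _)
          (Finset.mem_erase.2 ⟨hwv, Finset.mem_univ w⟩)
        omega
      refine ⟨v, fun u huv => ?_⟩
      by_cases huw : u = w
      · exact huw ▸ hwadj.symm
      · have hzero : f u = 0 := by
          have h2' : ∑ x ∈ (Finset.univ.erase v).erase w, f x = 0 := by
            have := Finset.sum_erase_add (Finset.univ.erase v) f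
              (Finset.mem_erase.2 ⟨hwv, Finset.mem_univ w⟩)
            omega
          exact Finset.sum_eq_zero_iff.1 h2' u
            (Finset.mem_erase.2 ⟨huw, Finset.mem_erase.2 ⟨huv, Finset.mem_univ u⟩⟩)
        obtain ⟨x, hxadj, hx2⟩ := h0 u hzero
        have hxv : x = v := by
          by_contra hxv
          have : f x ≤ 1 := hrest ▸ Finset.single_le_sum
            (fun i _ => Nat.zero_le _)
            (Finset.mem_erase.2 ⟨hxv, Finset.mem_univ x⟩)
          omega
        exact hxv ▸ hxadj
    · push_neg at hv2
      have hall1 : ∀ v, f v = 1 := by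
        intro v
        have hle : f v ≤ 2 := h2 v
        have hne2 : f v ≠ 2 := hv2 v
        by_contra hne1
        have hz : f v = 0 := by omega
        obtain ⟨x, _, hx2⟩ := h0 v hz
        exact hv2 x hx2
      have hcard : Fintype.card V = 3 := by
        have : ∑ v : V, f v = Fintype.card V := by
          simp [hall1]
        omega
      have : Nonempty V := Fintype.card_pos_iff.mp (by omega)
      obtain ⟨a⟩ := this
      obtain ⟨b, hba⟩ := h a
      have hbna : b ≠ a := hba.ne
      have hcex : ∃ c : V, c ∉ ({a, b} : Finset V) := by
        by_contra hc
        push_neg at hc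
        have huniv : (Finset.univ : Finset V) = {a, b} :=
          Finset.eq_univ_iff_forall.2 hc |>.symm
        have := congrArg Finset.card huniv
        rw [Finset.card_univ, hcard] at this
        have hle : ({a, b} : Finset V).card ≤ 2 := Finset.card_insert_le _ _ |>.trans (by simp)
        omega
      obtain ⟨c, hc⟩ := hcex
      simp only [Finset.mem_insert, Finset.mem_singleton, not_or] at hc
      obtain ⟨hca, hcb⟩ := hc
      have huniv : (Finset.univ : Finset V) = {a, b, c} := by
        symm
        apply Finset.eq_univ_of_card
        rw [Finset.card_insert_of_notMem (by simp [Ne.symm hbna, Ne.symm hca]),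
          Finset.card_insert_of_notMem (by simp [Ne.symm hcb]),
          Finset.card_singleton, hcard]
      have hmem : ∀ x : V, x = a ∨ x = b ∨ x = c := by
        intro x
        have : x ∈ ({a, b, c} : Finset V) := huniv ▸ Finset.mem_univ x
        simpa using this
      obtain ⟨d, hdc⟩ := h c
      have hdnc : d ≠ c := hdc.ne
      rcases hmem d with hd | hd | hd
      · subst hd
        refine ⟨d, fun u hu => ?_⟩
        rcases hmem u with h' | h' | h'
        · exact absurd h' hu
        · exact h' ▸ hba.symm
        · exact h' ▸ hdc
      · subst hd
        refine ⟨d, fun u hu => ?_⟩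
        rcases hmem u with h' | h' | h'
        · exact h' ▸ hba
        · exact absurd h' hu
        · exact h' ▸ hdc
      · exact absurd hd hdnc
  · intro ⟨v, hv⟩
    obtain ⟨f, hf, hsum⟩ := universal_trdf G hn v hv
    have h3 : 3 ∈ {n | ∃ f : V → ℕ, IsTRDF G f ∧ ∑ v, f v = n} := ⟨f, hf, hsum⟩
    refine le_antisymm (Nat.sInf_le h3) (le_csInf ⟨3, h3⟩ ?_)
    rintro n ⟨g, hg, rfl⟩
    exact trdf_sum_ge G h hn g hg
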